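/- Let ψ and φ be pure states on ℂ^d with rank Δ(φ) = rank Δ(ψ). If there exists an incoherent operation T with T(|φ⟩⟨φ|) = |ψ⟩⟨ψ|, then Δ(ψ) majorizes Δ(φ), i.e., Δ(ψ) ≻ Δ(φ). -/

import Mathlib

namespace Coherence

open Matrix
open scoped BigOperators ComplexOrder

variable {ι κ : Type*} [Fintype ι] [DecidableEq ι] [Fintype κ] [DecidableEq κ]

/-- A density matrix: positive semidefinite with unit trace. -/
def IsDensity (ρ : Matrix ι ι ℂ) : Prop := ρ.PosSemidef ∧ ρ.trace = 1

/-- The dephasing (decohering) map Δ in the fixed (incoherent) basis. -/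
def dephase (ρ : Matrix ι ι ℂ) : Matrix ι ι ℂ := Matrix.diagonal (fun i => ρ i i)

/-- The pure state |v⟩⟨v| associated with a vector `v`. -/
def pureState (v : ι → ℂ) : Matrix ι ι ℂ := Matrix.of fun i j => v i * star (v j)

/-- `v` is a unit vector. -/
def IsUnitVec (v : ι → ℂ) : Prop := ∑ i, ‖v i‖ ^ 2 = 1

/-- An incoherent Kraus operator: each column has at most one nonzero entry,
i.e. `K = ∑ i c(i) |j(i)⟩⟨i|` for a function `j` on basis indices. -/
def IncoherentKraus (K : Matrix κ ι ℂ) : Prop :=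
  ∀ i : ι, ∃ j : κ, ∀ j' : κ, K j' i ≠ 0 → j' = j

/-- A strictly incoherent Kraus operator: `K` and `K†` are both incoherent. -/
def StrictlyIncoherentKraus (K : Matrix κ ι ℂ) : Prop :=
  IncoherentKraus K ∧ IncoherentKraus Kᴴ

/-- An incoherent operation: a cptp map admitting a Kraus representation by
incoherent Kraus operators. -/
def IsIncoherentOp (T : Matrix ι ι ℂ → Matrix κ κ ℂ) : Prop :=
  ∃ (m : ℕ) (K : Fin m → Matrix κ ι ℂ),
    (∀ ℓ, IncoherentKraus (K ℓ)) ∧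
    (∑ ℓ, (K ℓ)ᴴ * K ℓ = 1) ∧
    (∀ ρ, T ρ = ∑ ℓ, K ℓ * ρ * (K ℓ)ᴴ)

/-- A strictly incoherent operation. -/
def IsStrictlyIncoherentOp (T : Matrix ι ι ℂ → Matrix κ κ ℂ) : Prop :=
  ∃ (m : ℕ) (K : Fin m → Matrix κ ι ℂ),
    (∀ ℓ, StrictlyIncoherentKraus (K ℓ)) ∧
    (∑ ℓ, (K ℓ)ᴴ * K ℓ = 1) ∧
    (∀ ρ, T ρ = ∑ ℓ, K ℓ * ρ * (K ℓ)ᴴ)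

/-- Functional calculus for Hermitian matrices (junk value `0` otherwise). -/
noncomputable def matFun (f : ℝ → ℝ) (A : Matrix ι ι ℂ) : Matrix ι ι ℂ :=
  if h : A.IsHermitian then
    (h.eigenvectorUnitary : Matrix ι ι ℂ) *
      Matrix.diagonal (fun i => (f (h.eigenvalues i) : ℂ)) *
      (star (h.eigenvectorUnitary : Matrix ι ι ℂ))
  else 0

/-- Von Neumann entropy `S(ρ) = −tr ρ log₂ ρ` (with the convention 0 log 0 = 0). -/
noncomputable def vN (ρ : Matrix ι ι ℂ) : ℝ :=
  if h : ρ.IsHermitian then -∑ i, h.eigenvalues i * Real.logb 2 (h.eigenvalues i) else 0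

noncomputable def matLog2 (A : Matrix ι ι ℂ) : Matrix ι ι ℂ := matFun (Real.logb 2) A

noncomputable def matSqrt (A : Matrix ι ι ℂ) : Matrix ι ι ℂ := matFun Real.sqrt A

/-- Quantum relative entropy `S(ρ‖σ) = tr ρ (log₂ ρ − log₂ σ)`. -/
noncomputable def relEnt (ρ σ : Matrix ι ι ℂ) : ℝ :=
  ((ρ * (matLog2 ρ - matLog2 σ)).trace).re

/-- Fidelity `F(ρ,σ) = tr √(√ρ σ √ρ)`. -/
noncomputable def fidelity (ρ σ : Matrix ι ι ℂ) : ℝ :=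
  ((matSqrt (matSqrt ρ * σ * matSqrt ρ)).trace).re

/-- Trace norm `‖A‖₁ = tr √(A†A)`. -/
noncomputable def traceNorm (A : Matrix ι ι ℂ) : ℝ :=
  ((matSqrt (Aᴴ * A)).trace).re

/-- Bures distance `B(ρ,σ) = √2 √(1 − F(ρ,σ))`. -/
noncomputable def bures (ρ σ : Matrix ι ι ℂ) : ℝ :=
  Real.sqrt 2 * Real.sqrt (1 - fidelity ρ σ)

/-- Binary entropy function. -/
noncomputable def binEnt (x : ℝ) : ℝ :=
  -(x * Real.logb 2 x) - (1 - x) * Real.logb 2 (1 - x)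

/-- The `n`-fold tensor (Kronecker) power of a matrix, with indices the product basis. -/
def tpow (ρ : Matrix ι ι ℂ) (n : ℕ) : Matrix (Fin n → ι) (Fin n → ι) ℂ :=
  Matrix.of fun i j => ∏ t, ρ (i t) (j t)

/-- The unit (qubit maximally coherent) state Φ₂. -/
noncomputable def Phi2 : Matrix (Fin 2) (Fin 2) ℂ := Matrix.of fun _ _ => (1 / 2 : ℂ)

/-- Relative entropy of coherence `C_r(ρ) = S(Δ(ρ)) − S(ρ)`. -/
noncomputable def Cr (ρ : Matrix ι ι ℂ) : ℝ := vN (dephase ρ) - vN ρ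

/-- Coherence of formation: the least average entropy of coherence over finite
pure-state decompositions of `ρ`. -/
noncomputable def Cf (ρ : Matrix ι ι ℂ) : ℝ :=
  sInf {x | ∃ (m : ℕ) (p : Fin m → ℝ) (v : Fin m → ι → ℂ),
    (∀ k, 0 ≤ p k) ∧ (∀ k, IsUnitVec (v k)) ∧
    ρ = ∑ k, (p k : ℂ) • pureState (v k) ∧
    x = ∑ k, p k * vN (dephase (pureState (v k)))}

/-- `R` is an achievable coherence-distillation rate for `ρ`. -/
def DistillRate {d : ℕ} (ρ : Matrix (Fin d) (Fin d) ℂ) (R : ℝ) : Prop :=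
  0 ≤ R ∧ ∀ ε > 0, ∃ N : ℕ, ∀ n ≥ N,
    ∃ T : Matrix (Fin n → Fin d) (Fin n → Fin d) ℂ →
          Matrix (Fin ⌊(n : ℝ) * R⌋₊ → Fin 2) (Fin ⌊(n : ℝ) * R⌋₊ → Fin 2) ℂ,
      IsIncoherentOp T ∧ 1 - ε ≤ fidelity (T (tpow ρ n)) (tpow Phi2 ⌊(n : ℝ) * R⌋₊)

/-- Distillable coherence. -/
noncomputable def Cd {d : ℕ} (ρ : Matrix (Fin d) (Fin d) ℂ) : ℝ :=
  sSup {R | DistillRate ρ R}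

/-- `R` is an achievable coherence-formation rate for `ρ`. -/
def FormRate {d : ℕ} (ρ : Matrix (Fin d) (Fin d) ℂ) (R : ℝ) : Prop :=
  0 ≤ R ∧ ∀ ε > 0, ∃ N : ℕ, ∀ n ≥ N,
    ∃ T : Matrix (Fin ⌈(n : ℝ) * R⌉₊ → Fin 2) (Fin ⌈(n : ℝ) * R⌉₊ → Fin 2) ℂ →
          Matrix (Fin n → Fin d) (Fin n → Fin d) ℂ,
      IsIncoherentOp T ∧ 1 - ε ≤ fidelity (T (tpow Phi2 ⌈(n : ℝ) * R⌉₊)) (tpow ρ n)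

/-- Coherence cost. -/
noncomputable def Cc {d : ℕ} (ρ : Matrix (Fin d) (Fin d) ℂ) : ℝ :=
  sInf {R | FormRate ρ R}

/-- Sum of the `t` largest entries of the vector `p` (as a sup over size-`t` subsets). -/
noncomputable def sumTop (p : ι → ℝ) (t : ℕ) : ℝ :=
  sSup {x | ∃ A : Finset ι, A.card = t ∧ x = ∑ i ∈ A, p i}

/-- The spectrum of a Hermitian matrix (junk value `0` otherwise). -/
noncomputable def matSpectrum (A : Matrix ι ι ℂ) : ι → ℝ :=
  if h : A.IsHermitian then h.eigenvalues else 0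

/-- `A ≻ B`: the spectrum of `A` majorizes the spectrum of `B`. -/
def MajorizesMat (A B : Matrix ι ι ℂ) : Prop :=
  (∀ t : ℕ, sumTop (matSpectrum B) t ≤ sumTop (matSpectrum A) t) ∧
  ∑ i, matSpectrum A i = ∑ i, matSpectrum B i


-- ## Auxiliary lemmas

section Aux
open Polynomial

lemma self_mul_star' (z : ℂ) : z * star z = ((‖z‖^2 : ℝ) : ℂ) := by
  rw [Complex.star_def, Complex.mul_conj, Complex.normSq_eq_norm_sq]

lemma star_mul_self' (z : ℂ) : star z * z = ((‖z‖^2 : ℝ) : ℂ) := by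
  rw [mul_comm]; exact self_mul_star' z

lemma mapperm {n : ℕ} (σ : Equiv.Perm (Fin n)) :
    Multiset.map (⇑σ) Finset.univ.val = Finset.univ.val := by
  have := congrArg Finset.val (Finset.map_univ_equiv σ)
  simpa [Finset.map_val] using this

lemma exists_perm_of_multiset_eq {n : ℕ} {f g : Fin n → ℝ}
    (h : Multiset.map f Finset.univ.val = Multiset.map g Finset.univ.val) :
    ∃ e : Equiv.Perm (Fin n), ∀ i, f i = g (e i) := by
  have key : ∀ (u : Fin n → ℝ) (σ : Equiv.Perm (Fin n)),
      Multiset.map (u ∘ σ) Finset.univ.val = Multiset.map u Finset.univ.val := by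
    intro u σ
    rw [← Multiset.map_map, mapperm]
  have hperm : (List.ofFn (f ∘ Tuple.sort f)).Perm (List.ofFn (g ∘ Tuple.sort g)) := by
    rw [← Multiset.coe_eq_coe, ← Fin.univ_val_map, ← Fin.univ_val_map, key, key, h]
  have heq : List.ofFn (f ∘ Tuple.sort f) = List.ofFn (g ∘ Tuple.sort g) :=
    (fun h1 h2 => List.Perm.eq_of_sortedLE h1 h2 hperm)
      ((Tuple.monotone_sort f).sortedLE_ofFn) ((Tuple.monotone_sort g).sortedLE_ofFn)
  have hfg : f ∘ Tuple.sort f = g ∘ Tuple.sort g := List.ofFn_injective heq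
  refine ⟨(Tuple.sort f).symm.trans (Tuple.sort g), fun i => ?_⟩
  have := congrFun hfg ((Tuple.sort f).symm i)
  simpa using this

lemma diag_herm {n : ℕ} (f : Fin n → ℝ) :
    (Matrix.diagonal (fun i => (f i : ℂ))).IsHermitian := by
  rw [Matrix.IsHermitian, Matrix.diagonal_conjTranspose]
  have hs : (star fun i => ((f i : ℂ))) = (fun i => ((f i : ℂ))) := by
    funext i
    simpa using Complex.conj_ofReal (f i)
  rw [hs]

lemma det_smul_one_sub_diag {n : ℕ} (g : Fin n → ℂ) (x : ℂ) :
    Matrix.det (x • (1 : Matrix (Fin n) (Fin n) ℂ) - Matrix.diagonal g)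
      = ∏ i, (x - g i) := by
  rw [Matrix.smul_one_eq_diagonal, Matrix.diagonal_sub, Matrix.det_diagonal]

lemma multiset_eigenvalues_diagonal {n : ℕ} (f : Fin n → ℝ) :
    Multiset.map (diag_herm f).eigenvalues Finset.univ.val
      = Multiset.map f Finset.univ.val := by
  set h := diag_herm f with hh
  set lam := h.eigenvalues with hlam
  have hdet : ∀ x : ℂ, (∏ i, (x - (f i : ℂ))) = ∏ i, (x - (lam i : ℂ)) := by
    intro x
    have hst := h.spectral_theorem
    rw [← hlam, Unitary.conjStarAlgAut_apply] at hst
    set U : Matrix (Fin n) (Fin n) ℂ := (h.eigenvectorUnitary : Matrix (Fin n) (Fin n) ℂ) with hUdef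
    have hU : U * star U = 1 := Matrix.mem_unitaryGroup_iff.mp h.eigenvectorUnitary.2
    have key : x • (1 : Matrix (Fin n) (Fin n) ℂ) - Matrix.diagonal (fun i => (f i : ℂ))
        = U * (x • 1 - Matrix.diagonal (RCLike.ofReal ∘ lam)) * star U := by
      rw [Matrix.mul_sub, Matrix.sub_mul, ← hst, Matrix.mul_smul, mul_one,
        Matrix.smul_mul, hU]
    have hU' : U.det * (star U).det = 1 := by
      rw [← Matrix.det_mul, hU, Matrix.det_one]
    have hd := congrArg Matrix.det key
    rw [det_smul_one_sub_diag, Matrix.det_mul, Matrix.det_mul, det_smul_one_sub_diag,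
      mul_right_comm, hU', one_mul] at hd
    rw [hd]
    rfl
  have hpoly : (∏ i, (X - C ((f i : ℂ)))) = ∏ i, (X - C ((lam i : ℂ))) := by
    apply Polynomial.funext
    intro x
    simpa [Polynomial.eval_prod] using hdet x
  have e1 : ∀ (u : Fin n → ℝ), Multiset.map (fun i => X - C ((u i : ℂ))) Finset.univ.val
      = Multiset.map (fun a : ℂ => X - C a)
          (Multiset.map (fun i => ((u i : ℂ))) Finset.univ.val) := by
    intro u; rw [Multiset.map_map]; rfl
  have hroots : Multiset.map (fun i => ((f i : ℂ))) Finset.univ.val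
      = Multiset.map (fun i => ((lam i : ℂ))) Finset.univ.val := by
    have h1 := congrArg Polynomial.roots hpoly
    rwa [Finset.prod_eq_multiset_prod, Finset.prod_eq_multiset_prod, e1, e1,
      Polynomial.roots_multiset_prod_X_sub_C, Polynomial.roots_multiset_prod_X_sub_C] at h1
  apply Multiset.map_injective (α := ℝ) (β := ℂ) Complex.ofReal_injective
  rw [Multiset.map_map, Multiset.map_map]
  exact hroots.symm

lemma matSpectrum_diagonal {n : ℕ} (f : Fin n → ℝ) :
    ∃ e : Equiv.Perm (Fin n),
      ∀ i, matSpectrum (Matrix.diagonal fun i => (f i : ℂ)) i = f (e i) := by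
  have h1 : matSpectrum (Matrix.diagonal fun i => (f i : ℂ)) = (diag_herm f).eigenvalues := by
    unfold matSpectrum
    rw [dif_pos (diag_herm f)]
  rw [h1]
  exact exists_perm_of_multiset_eq (multiset_eigenvalues_diagonal f)

-- ## sumTop lemmas

lemma bddAbove_sumTop_set {n : ℕ} (f : Fin n → ℝ) (t : ℕ) :
    BddAbove {x | ∃ A : Finset (Fin n), A.card = t ∧ x = ∑ i ∈ A, f i} := by
  refine ⟨∑ i, max (f i) 0, ?_⟩
  rintro x ⟨A, hA, rfl⟩
  calc ∑ i ∈ A, f i ≤ ∑ i ∈ A, max (f i) 0 :=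
        Finset.sum_le_sum fun i _ => le_max_left _ _
    _ ≤ ∑ i, max (f i) 0 :=
        Finset.sum_le_sum_of_subset_of_nonneg (Finset.subset_univ A)
          (fun i _ _ => le_max_right _ _)

lemma le_sumTop {n : ℕ} (f : Fin n → ℝ) {A : Finset (Fin n)} {t : ℕ} (hA : A.card = t) :
    ∑ i ∈ A, f i ≤ sumTop f t :=
  le_csSup (bddAbove_sumTop_set f t) ⟨A, hA, rfl⟩

lemma sumTop_le {n : ℕ} {f : Fin n → ℝ} {t : ℕ} {c : ℝ} (hc : 0 ≤ c)
    (h : ∀ A : Finset (Fin n), A.card = t → ∑ i ∈ A, f i ≤ c) : sumTop f t ≤ c := by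
  apply Real.sSup_le _ hc
  rintro x ⟨A, hA, rfl⟩
  exact h A hA

lemma sumTop_comp_perm {n : ℕ} (f : Fin n → ℝ) (e : Equiv.Perm (Fin n)) (t : ℕ) :
    sumTop (fun i => f (e i)) t = sumTop f t := by
  unfold sumTop
  congr 1
  ext x
  constructor
  · rintro ⟨A, hA, rfl⟩
    refine ⟨A.map e.toEmbedding, by simp [hA], ?_⟩
    rw [Finset.sum_map]
    rfl
  · rintro ⟨B, hB, rfl⟩
    refine ⟨B.map e.symm.toEmbedding, by simp [hB], ?_⟩
    rw [Finset.sum_map]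
    simp

lemma sumTop_of_card_lt {n : ℕ} (f : Fin n → ℝ) {t : ℕ} (h : n < t) :
    sumTop f t = 0 := by
  unfold sumTop
  have : {x | ∃ A : Finset (Fin n), A.card = t ∧ x = ∑ i ∈ A, f i} = ∅ := by
    ext x
    simp only [Set.mem_setOf_eq, Set.mem_empty_iff_false, iff_false, not_exists]
    rintro A ⟨hA, -⟩
    have h2 : A.card ≤ n := by simpa using Finset.card_le_univ A
    omega
  rw [this]
  exact Real.sSup_empty

lemma mul_pure_mul {d : ℕ} (K : Matrix (Fin d) (Fin d) ℂ) (v : Fin d → ℂ) :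
    K * pureState v * Kᴴ = pureState (K *ᵥ v) := by
  ext a b
  have lhs : (K * pureState v * Kᴴ) a b
      = ∑ j, ∑ i, K a i * (v i * star (v j)) * star (K b j) := by
    rw [Matrix.mul_apply]
    refine Finset.sum_congr rfl fun j _ => ?_
    rw [Matrix.mul_apply, Matrix.conjTranspose_apply, Finset.sum_mul]
    rfl
  have rhs : pureState (K *ᵥ v) a b
      = ∑ i, ∑ j, (K a i * v i) * (star (K b j) * star (v j)) := by
    show (K *ᵥ v) a * star ((K *ᵥ v) b) = _
    rw [Matrix.mulVec, Matrix.mulVec, dotProduct, dotProduct, star_sum,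
      Finset.sum_mul_sum]
    exact Finset.sum_congr rfl fun i _ => Finset.sum_congr rfl fun j _ => by rw [star_mul']
  rw [lhs, rhs, Finset.sum_comm]
  exact Finset.sum_congr rfl fun i _ => Finset.sum_congr rfl fun j _ => by ring

end Aux

/-- If an incoherent operation transforms the pure state `φ` into the
pure state `ψ` and `rank Δ(φ) = rank Δ(ψ)`, then `Δ(ψ) ≻ Δ(φ)`. -/
theorem IC_rank_eq_implies_majorization {d : ℕ} (v w : Fin d → ℂ)
    (hv : IsUnitVec v) (hw : IsUnitVec w)
    (hrank : (dephase (pureState v)).rank = (dephase (pureState w)).rank)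
    (T : Matrix (Fin d) (Fin d) ℂ → Matrix (Fin d) (Fin d) ℂ)
    (hT : IsIncoherentOp T) (hTv : T (pureState v) = pureState w) :
    MajorizesMat (dephase (pureState w)) (dephase (pureState v)) := by
  classical
  obtain ⟨m, K, hinc, hcomp, hrep⟩ := hT
  have hinc' : ∀ ℓ (i : Fin d), ∃ j, ∀ j', K ℓ j' i ≠ 0 → j' = j := hinc
  choose J hJ using hinc'
  set p : Fin d → ℝ := fun i => ‖v i‖^2 with hp
  set q : Fin d → ℝ := fun j => ‖w j‖^2 with hq
  have hv1 : ∑ i, p i = 1 := hv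
  have hw1 : ∑ j, q j = 1 := hw
  have hp0 : ∀ i, 0 ≤ p i := fun i => sq_nonneg _
  have hq0 : ∀ j, 0 ≤ q j := fun j => sq_nonneg _
  have hdv : dephase (pureState v) = Matrix.diagonal (fun i => ((p i : ℝ) : ℂ)) := by
    unfold dephase
    have hfun : (fun i => pureState v i i) = fun i => ((p i : ℝ) : ℂ) :=
      funext fun i => self_mul_star' (v i)
    rw [hfun]
  have hdw : dephase (pureState w) = Matrix.diagonal (fun j => ((q j : ℝ) : ℂ)) := by
    unfold dephase
    have hfun : (fun j => pureState w j j) = fun j => ((q j : ℝ) : ℂ) :=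
      funext fun j => self_mul_star' (w j)
    rw [hfun]
  -- each Kraus operator maps v into the line spanned by w
  set u : Fin m → Fin d → ℂ := fun ℓ => K ℓ *ᵥ v with hudef
  have hsum : ∑ ℓ, pureState (u ℓ) = pureState w := by
    rw [← hTv, hrep]
    exact Finset.sum_congr rfl fun ℓ _ => (mul_pure_mul (K ℓ) v).symm
  have happ : ∀ a b, (∑ ℓ, u ℓ a * star (u ℓ b)) = w a * star (w b) := by
    intro a b
    have h1 := congrFun (congrFun hsum a) b
    rw [Matrix.sum_apply] at h1
    exact h1
  set μ : Fin m → ℂ := fun ℓ => ∑ a, star (w a) * u ℓ a with hμdef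
  have hww : (∑ a, star (w a) * w a) = 1 := by
    rw [Finset.sum_congr rfl fun a _ => star_mul_self' (w a), ← Complex.ofReal_sum, hw1,
      Complex.ofReal_one]
  have hww' : (∑ a, w a * star (w a)) = 1 := by
    rw [Finset.sum_congr rfl fun a _ => mul_comm (w a) (star (w a))]
    exact hww
  have hqf : ∑ ℓ, μ ℓ * star (μ ℓ) = 1 := by
    have hterm : ∀ ℓ, μ ℓ * star (μ ℓ)
        = ∑ a, ∑ b, star (w a) * w b * (u ℓ a * star (u ℓ b)) := by
      intro ℓ
      rw [hμdef]
      simp only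
      rw [star_sum, Finset.sum_mul_sum]
      refine Finset.sum_congr rfl fun a _ => Finset.sum_congr rfl fun b _ => ?_
      rw [star_mul', star_star]
      ring
    calc ∑ ℓ, μ ℓ * star (μ ℓ)
        = ∑ ℓ, ∑ a, ∑ b, star (w a) * w b * (u ℓ a * star (u ℓ b)) :=
          Finset.sum_congr rfl fun ℓ _ => hterm ℓ
      _ = ∑ a, ∑ b, ∑ ℓ, star (w a) * w b * (u ℓ a * star (u ℓ b)) := by
          rw [Finset.sum_comm]
          exact Finset.sum_congr rfl fun a _ => Finset.sum_comm
      _ = ∑ a, ∑ b, star (w a) * w b * (w a * star (w b)) := by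
          refine Finset.sum_congr rfl fun a _ => Finset.sum_congr rfl fun b _ => ?_
          rw [← Finset.mul_sum, happ a b]
      _ = (∑ a, star (w a) * w a) * (∑ b, w b * star (w b)) := by
          rw [Finset.sum_mul_sum]
          refine Finset.sum_congr rfl fun a _ => Finset.sum_congr rfl fun b _ => ?_
          ring
      _ = 1 := by rw [hww, hww', one_mul]
  have hμ1 : ∑ ℓ, ‖μ ℓ‖^2 = 1 := by
    have h2 : ((∑ ℓ, ‖μ ℓ‖^2 : ℝ) : ℂ) = 1 := by
      rw [Complex.ofReal_sum, ← hqf]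
      exact Finset.sum_congr rfl fun ℓ _ => (self_mul_star' _).symm
    exact_mod_cast h2
  have htr : ∑ ℓ, ∑ a, u ℓ a * star (u ℓ a) = 1 := by
    rw [Finset.sum_comm]
    calc ∑ a, ∑ ℓ, u ℓ a * star (u ℓ a)
        = ∑ a, w a * star (w a) := Finset.sum_congr rfl fun a _ => happ a a
      _ = 1 := hww'
  set r : Fin m → Fin d → ℂ := fun ℓ a => u ℓ a - μ ℓ * w a with hrdef
  have hcross : ∀ ℓ, ∑ a, star (w a) * r ℓ a = 0 := by
    intro ℓ
    have h1 : ∀ a, star (w a) * r ℓ a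
        = star (w a) * u ℓ a - μ ℓ * (star (w a) * w a) := by
      intro a
      rw [hrdef]
      ring
    rw [Finset.sum_congr rfl fun a _ => h1 a, Finset.sum_sub_distrib, ← Finset.mul_sum, hww,
      mul_one, hμdef]
    simp only [sub_self]
  have hpyth : ∀ ℓ, ∑ a, u ℓ a * star (u ℓ a)
      = μ ℓ * star (μ ℓ) + ∑ a, r ℓ a * star (r ℓ a) := by
    intro ℓ
    have hXa : ∀ a, u ℓ a = μ ℓ * w a + r ℓ a := by
      intro a
      rw [hrdef]
      ring
    have expand : ∀ a, u ℓ a * star (u ℓ a)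
        = μ ℓ * star (μ ℓ) * (w a * star (w a))
          + μ ℓ * (w a * star (r ℓ a)) + star (μ ℓ) * (star (w a) * r ℓ a)
          + r ℓ a * star (r ℓ a) := by
      intro a
      conv_lhs => rw [hXa a]
      rw [star_add, star_mul']
      ring
    have h2 : ∑ a, w a * star (r ℓ a) = 0 := by
      have h3 : ∑ a, w a * star (r ℓ a) = star (∑ a, star (w a) * r ℓ a) := by
        rw [star_sum]
        exact Finset.sum_congr rfl fun a _ => by rw [star_mul', star_star]
      rw [h3, hcross ℓ, star_zero]
    rw [Finset.sum_congr rfl fun a _ => expand a, Finset.sum_add_distrib,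
      Finset.sum_add_distrib, Finset.sum_add_distrib, ← Finset.mul_sum, ← Finset.mul_sum,
      ← Finset.mul_sum, h2, hcross ℓ, mul_zero, mul_zero, add_zero, add_zero, hww', mul_one]
  have hvec : ∀ ℓ a, u ℓ a = μ ℓ * w a := by
    have hzero : ∑ ℓ, ∑ a, r ℓ a * star (r ℓ a) = 0 := by
      have hs := htr
      rw [Finset.sum_congr rfl fun ℓ _ => hpyth ℓ, Finset.sum_add_distrib, hqf] at hs
      linear_combination hs
    have hzero' : ∑ ℓ, ∑ a, ‖r ℓ a‖^2 = 0 := by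
      have h2 : ((∑ ℓ, ∑ a, ‖r ℓ a‖^2 : ℝ) : ℂ) = 0 := by
        rw [Complex.ofReal_sum, ← hzero]
        refine Finset.sum_congr rfl fun ℓ _ => ?_
        rw [Complex.ofReal_sum]
        exact Finset.sum_congr rfl fun a _ => (self_mul_star' _).symm
      exact_mod_cast h2
    intro ℓ a
    have h4 : ∑ a, ‖r ℓ a‖^2 = 0 :=
      (Finset.sum_eq_zero_iff_of_nonneg
        (fun ℓ _ => Finset.sum_nonneg fun a _ => sq_nonneg _)).mp hzero' ℓ (Finset.mem_univ ℓ)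
    have h5 : ‖r ℓ a‖^2 = 0 :=
      (Finset.sum_eq_zero_iff_of_nonneg (fun a _ => sq_nonneg _)).mp h4 a (Finset.mem_univ a)
    have h6 : r ℓ a = 0 :=
      norm_eq_zero.mp ((pow_eq_zero_iff (by norm_num : (2:ℕ) ≠ 0)).mp h5)
    exact sub_eq_zero.mp h6
  -- completeness on columns
  have hcol : ∀ i, ∑ ℓ, ∑ j, ‖K ℓ j i‖^2 = 1 := by
    intro i
    have h1 := congrFun (congrFun hcomp i) i
    rw [Matrix.sum_apply] at h1
    have h2 : ∀ ℓ, ((K ℓ)ᴴ * K ℓ) i i = ((∑ j, ‖K ℓ j i‖^2 : ℝ) : ℂ) := by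
      intro ℓ
      rw [Matrix.mul_apply, Complex.ofReal_sum]
      exact Finset.sum_congr rfl fun j _ => by
        rw [Matrix.conjTranspose_apply]; exact star_mul_self' _
    rw [Finset.sum_congr rfl fun ℓ _ => h2 ℓ, Matrix.one_apply_eq, ← Complex.ofReal_sum] at h1
    exact_mod_cast h1
  -- supports
  set Sv : Finset (Fin d) := Finset.univ.filter (fun i => v i ≠ 0) with hSvdef
  set Sw : Finset (Fin d) := Finset.univ.filter (fun j => w j ≠ 0) with hSwdef
  have hv' : (dephase (pureState v)).rank = Sv.card := by
    rw [hdv, Matrix.rank_diagonal, Fintype.card_subtype]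
    congr 1
    ext i
    simp [hp, hSvdef, Finset.mem_filter, Complex.ofReal_eq_zero, pow_eq_zero_iff, norm_eq_zero]
  have hw'' : (dephase (pureState w)).rank = Sw.card := by
    rw [hdw, Matrix.rank_diagonal, Fintype.card_subtype]
    congr 1
    ext j
    simp [hq, hSwdef, Finset.mem_filter, Complex.ofReal_eq_zero, pow_eq_zero_iff, norm_eq_zero]
  have hcard : Sw.card = Sv.card := by
    rw [← hw'', ← hv']
    exact hrank.symm
  set L : Finset (Fin m) := Finset.univ.filter (fun ℓ => μ ℓ ≠ 0) with hLdef
  have hL1 : ∑ ℓ ∈ L, ‖μ ℓ‖^2 = 1 := by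
    rw [← hμ1]
    apply Finset.sum_subset (Finset.filter_subset _ _)
    intro ℓ _ hℓ
    have hz : μ ℓ = 0 := by
      by_contra hne
      exact hℓ (Finset.mem_filter.mpr ⟨Finset.mem_univ ℓ, hne⟩)
    rw [hz]
    simp
  -- injective support maps
  have himg : ∀ ℓ ∈ L, Sv.image (J ℓ) = Sw ∧ Set.InjOn (J ℓ) ↑Sv := by
    intro ℓ hℓ
    have hμne : μ ℓ ≠ 0 := (Finset.mem_filter.mp hℓ).2
    have hsubs : Sw ⊆ Sv.image (J ℓ) := by
      intro j hj
      have hwj : w j ≠ 0 := (Finset.mem_filter.mp hj).2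
      have huj : u ℓ j ≠ 0 := by
        rw [hvec ℓ j]
        exact mul_ne_zero hμne hwj
      have hsum' : ∑ i, K ℓ j i * v i ≠ 0 := huj
      obtain ⟨i, -, hne⟩ := Finset.exists_ne_zero_of_sum_ne_zero hsum'
      have hKne : K ℓ j i ≠ 0 := fun h => hne (by rw [h, zero_mul])
      have hvne : v i ≠ 0 := fun h => hne (by rw [h, mul_zero])
      have hji : j = J ℓ i := hJ ℓ i j hKne
      exact Finset.mem_image.mpr ⟨i, Finset.mem_filter.mpr ⟨Finset.mem_univ i, hvne⟩, hji.symm⟩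
    have hcard2 : (Sv.image (J ℓ)).card ≤ Sw.card := by
      calc (Sv.image (J ℓ)).card ≤ Sv.card := Finset.card_image_le
        _ = Sw.card := hcard.symm
    have heq : Sv.image (J ℓ) = Sw := (Finset.eq_of_subset_of_card_le hsubs hcard2).symm
    refine ⟨heq, Finset.card_image_iff.mp ?_⟩
    rw [heq, hcard]
  -- the key identity
  have hkey : ∀ ℓ ∈ L, ∀ i ∈ Sv, ‖μ ℓ‖^2 * q (J ℓ i) = ‖K ℓ (J ℓ i) i‖^2 * p i := by
    intro ℓ hℓ i hi
    have hinj := (himg ℓ hℓ).2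
    have hone : u ℓ (J ℓ i) = K ℓ (J ℓ i) i * v i := by
      have hrfl : u ℓ (J ℓ i) = ∑ i', K ℓ (J ℓ i) i' * v i' := rfl
      rw [hrfl]
      apply Finset.sum_eq_single i
      · intro i' _ hne
        by_cases hv0 : v i' = 0
        · rw [hv0, mul_zero]
        · by_cases hK : K ℓ (J ℓ i) i' = 0
          · rw [hK, zero_mul]
          · exfalso
            have h1 : J ℓ i = J ℓ i' := hJ ℓ i' (J ℓ i) hK
            have hi' : i' ∈ Sv := Finset.mem_filter.mpr ⟨Finset.mem_univ i', hv0⟩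
            exact hne (hinj (Finset.mem_coe.mpr hi') (Finset.mem_coe.mpr hi) h1.symm)
      · intro h
        exact absurd (Finset.mem_univ i) h
    have hc := congrArg (fun z => ‖z‖^2) ((hvec ℓ (J ℓ i)).symm.trans hone)
    simpa [norm_mul, mul_pow, hq, hp] using hc
  -- pointwise inequality
  have hgle : ∀ i ∈ Sv, ∑ ℓ ∈ L, ‖μ ℓ‖^2 * q (J ℓ i) ≤ p i := by
    intro i hi
    have h1 : ∑ ℓ ∈ L, ‖μ ℓ‖^2 * q (J ℓ i) = (∑ ℓ ∈ L, ‖K ℓ (J ℓ i) i‖^2) * p i := by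
      rw [Finset.sum_mul]
      exact Finset.sum_congr rfl fun ℓ hℓ => hkey ℓ hℓ i hi
    rw [h1]
    have h2 : ∑ ℓ ∈ L, ‖K ℓ (J ℓ i) i‖^2 ≤ 1 := by
      rw [← hcol i]
      calc ∑ ℓ ∈ L, ‖K ℓ (J ℓ i) i‖^2
          ≤ ∑ ℓ, ‖K ℓ (J ℓ i) i‖^2 :=
            Finset.sum_le_sum_of_subset_of_nonneg (Finset.filter_subset _ _)
              (fun ℓ _ _ => sq_nonneg _)
        _ ≤ ∑ ℓ, ∑ j, ‖K ℓ j i‖^2 := Finset.sum_le_sum fun ℓ _ =>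
            Finset.single_le_sum (fun j _ => sq_nonneg (‖K ℓ j i‖)) (Finset.mem_univ (J ℓ i))
    calc (∑ ℓ ∈ L, ‖K ℓ (J ℓ i) i‖^2) * p i
        ≤ 1 * p i := mul_le_mul_of_nonneg_right h2 (hp0 i)
      _ = p i := one_mul _
  have hsum_q_Sw : ∑ j ∈ Sw, q j = 1 := by
    rw [← hw1]
    apply Finset.sum_subset (Finset.filter_subset _ _)
    intro j _ hj
    have hz : w j = 0 := by
      by_contra hne
      exact hj (Finset.mem_filter.mpr ⟨Finset.mem_univ j, hne⟩)
    simp [hq, hz]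
  have hsum_p_Sv : ∑ i ∈ Sv, p i = 1 := by
    rw [← hv1]
    apply Finset.sum_subset (Finset.filter_subset _ _)
    intro i _ hi
    have hz : v i = 0 := by
      by_contra hne
      exact hi (Finset.mem_filter.mpr ⟨Finset.mem_univ i, hne⟩)
    simp [hp, hz]
  have hgsum : ∑ i ∈ Sv, ∑ ℓ ∈ L, ‖μ ℓ‖^2 * q (J ℓ i) = 1 := by
    rw [Finset.sum_comm]
    have h1 : ∀ ℓ ∈ L, ∑ i ∈ Sv, ‖μ ℓ‖^2 * q (J ℓ i) = ‖μ ℓ‖^2 := by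
      intro ℓ hℓ
      rw [← Finset.mul_sum]
      have h2 : ∑ i ∈ Sv, q (J ℓ i) = ∑ j ∈ Sv.image (J ℓ), q j :=
        (Finset.sum_image (fun x hx y hy hxy =>
          (himg ℓ hℓ).2 (Finset.mem_coe.mpr hx) (Finset.mem_coe.mpr hy) hxy)).symm
      rw [h2, (himg ℓ hℓ).1, hsum_q_Sw, mul_one]
    rw [Finset.sum_congr rfl h1, hL1]
  have hgeq := (Finset.sum_eq_sum_iff_of_le hgle).mp (by rw [hgsum, hsum_p_Sv])
  -- majorization for p, q
  have hmaj : ∀ t : ℕ, sumTop p t ≤ sumTop q t := by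
    intro t
    by_cases ht : t ≤ d
    · have h0 : 0 ≤ sumTop q t := by
        obtain ⟨A₀, -, hA₀⟩ := Finset.exists_subset_card_eq (s := (Finset.univ : Finset (Fin d))) (n := t)
          (by simpa using ht)
        calc (0:ℝ) ≤ ∑ j ∈ A₀, q j := Finset.sum_nonneg fun j _ => hq0 j
          _ ≤ sumTop q t := le_sumTop q hA₀
      apply sumTop_le h0
      intro A hA
      have hsub : ∑ i ∈ A, p i = ∑ i ∈ A ∩ Sv, p i := by
        refine (Finset.sum_subset Finset.inter_subset_left ?_).symm
        intro i hiA hiAS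
        have hz : v i = 0 := by
          by_contra hne
          exact hiAS (Finset.mem_inter.mpr ⟨hiA,
            Finset.mem_filter.mpr ⟨Finset.mem_univ i, hne⟩⟩)
        simp [hp, hz]
      rw [hsub]
      have hstep : ∑ i ∈ A ∩ Sv, p i
          = ∑ ℓ ∈ L, ‖μ ℓ‖^2 * (∑ i ∈ A ∩ Sv, q (J ℓ i)) := by
        rw [Finset.sum_congr rfl
          (fun i hi => (hgeq i (Finset.mem_of_mem_inter_right hi)).symm), Finset.sum_comm]
        exact Finset.sum_congr rfl fun ℓ _ => by rw [Finset.mul_sum]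
      rw [hstep]
      have hbound : ∀ ℓ ∈ L, ∑ i ∈ A ∩ Sv, q (J ℓ i) ≤ sumTop q t := by
        intro ℓ hℓ
        have h2 : ∑ i ∈ A ∩ Sv, q (J ℓ i) = ∑ j ∈ (A ∩ Sv).image (J ℓ), q j :=
          (Finset.sum_image (fun x hx y hy hxy =>
            (himg ℓ hℓ).2
              (Finset.mem_coe.mpr (Finset.mem_of_mem_inter_right hx))
              (Finset.mem_coe.mpr (Finset.mem_of_mem_inter_right hy)) hxy)).symm
        have hcard3 : ((A ∩ Sv).image (J ℓ)).card ≤ t := by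
          calc ((A ∩ Sv).image (J ℓ)).card ≤ (A ∩ Sv).card := Finset.card_image_le
            _ ≤ A.card := Finset.card_le_card Finset.inter_subset_left
            _ = t := hA
        obtain ⟨B', hB'sub, hB'card⟩ := Finset.exists_superset_card_eq hcard3
          (by simpa using ht)
        calc ∑ i ∈ A ∩ Sv, q (J ℓ i) = ∑ j ∈ (A ∩ Sv).image (J ℓ), q j := h2
          _ ≤ ∑ j ∈ B', q j :=
            Finset.sum_le_sum_of_subset_of_nonneg hB'sub fun j _ _ => hq0 j
          _ ≤ sumTop q t := le_sumTop q hB'card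
      calc ∑ ℓ ∈ L, ‖μ ℓ‖^2 * (∑ i ∈ A ∩ Sv, q (J ℓ i))
          ≤ ∑ ℓ ∈ L, ‖μ ℓ‖^2 * sumTop q t := Finset.sum_le_sum fun ℓ hℓ =>
            mul_le_mul_of_nonneg_left (hbound ℓ hℓ) (sq_nonneg _)
        _ = sumTop q t := by rw [← Finset.sum_mul, hL1, one_mul]
    · push_neg at ht
      rw [sumTop_of_card_lt p ht, sumTop_of_card_lt q ht]
  -- transfer to spectra
  obtain ⟨e₂, he₂⟩ := matSpectrum_diagonal p
  obtain ⟨e₁, he₁⟩ := matSpectrum_diagonal q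
  have hsv : matSpectrum (dephase (pureState v)) = fun i => p (e₂ i) := by
    rw [hdv]
    exact funext he₂
  have hsw : matSpectrum (dephase (pureState w)) = fun i => q (e₁ i) := by
    rw [hdw]
    exact funext he₁
  constructor
  · intro t
    rw [hsv, hsw, sumTop_comp_perm p e₂ t, sumTop_comp_perm q e₁ t]
    exact hmaj t
  · rw [hsv, hsw, Equiv.sum_comp e₁ q, Equiv.sum_comp e₂ p, hw1, hv1]

end Coherence
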